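/- For every 0 < α ≤ 1, c_η^N(α) ≥ c_η^2(α). -/

import Mathlib

open MeasureTheory ProbabilityTheory

noncomputable section

def midN (N : ℕ) (p : ℝ × (Fin (N-1) → ℝ)) : ℝ :=
  (max p.1 (⨆ i, p.2 i) + min p.1 (⨅ i, p.2 i)) / 2

def accN (N : ℕ) (η Δ : ℝ) : Set (ℝ × (Fin (N-1) → ℝ)) :=
  {p | max p.1 (⨆ i, p.2 i) - min p.1 (⨅ i, p.2 i) ≤ η * Δ}

def PA_N (N : ℕ) (η Δ : ℝ) (μ : Measure ℝ) (ν : Measure (Fin (N-1) → ℝ)) : ℝ :=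
  ((μ.prod ν) (accN N η Δ)).toReal

def MSE_N (N : ℕ) (η Δ : ℝ) (μ : Measure ℝ) (ν : Measure (Fin (N-1) → ℝ)) : ℝ :=
  ∫ p, (midN N p) ^ 2 ∂((μ.prod ν)[|accN N η Δ])

def mid2 (p : ℝ × ℝ) : ℝ := (max p.1 p.2 + min p.1 p.2) / 2

def acc2 (η Δ : ℝ) : Set (ℝ × ℝ) := {p | max p.1 p.2 - min p.1 p.2 ≤ η * Δ}

def PA_2 (η Δ : ℝ) (μ κ : Measure ℝ) : ℝ := ((μ.prod κ) (acc2 η Δ)).toReal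

def MSE_2 (η Δ : ℝ) (μ κ : Measure ℝ) : ℝ :=
  ∫ p, (mid2 p) ^ 2 ∂((μ.prod κ)[|acc2 η Δ])

def cN (N : ℕ) (η Δ : ℝ) (μ : Measure ℝ) (α : ℝ) : ℝ :=
  sSup {r | ∃ ν : Measure (Fin (N-1) → ℝ), IsProbabilityMeasure ν ∧
    α ≤ PA_N N η Δ μ ν ∧ r = MSE_N N η Δ μ ν}

def c2 (η Δ : ℝ) (μ : Measure ℝ) (α : ℝ) : ℝ :=
  sSup {r | ∃ κ : Measure ℝ, IsProbabilityMeasure κ ∧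
    α ≤ PA_2 η Δ μ κ ∧ r = MSE_2 η Δ μ κ}

def IsBestResponseN (N : ℕ) (η Δ : ℝ) (μ : Measure ℝ) (QAD : ℝ → ℝ → ℝ)
    (ν : Measure (Fin (N-1) → ℝ)) : Prop :=
  IsProbabilityMeasure ν ∧ 0 < PA_N N η Δ μ ν ∧
    ∀ ν' : Measure (Fin (N-1) → ℝ), IsProbabilityMeasure ν' → 0 < PA_N N η Δ μ ν' →
      QAD (MSE_N N η Δ μ ν') (PA_N N η Δ μ ν') ≤ QAD (MSE_N N η Δ μ ν) (PA_N N η Δ μ ν)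

def IsBestResponse2 (η Δ : ℝ) (μ : Measure ℝ) (QAD : ℝ → ℝ → ℝ) (κ : Measure ℝ) : Prop :=
  IsProbabilityMeasure κ ∧ 0 < PA_2 η Δ μ κ ∧
    ∀ κ' : Measure ℝ, IsProbabilityMeasure κ' → 0 < PA_2 η Δ μ κ' →
      QAD (MSE_2 η Δ μ κ') (PA_2 η Δ μ κ') ≤ QAD (MSE_2 η Δ μ κ) (PA_2 η Δ μ κ)

theorem stmt1 {N : ℕ} (hN : 2 ≤ N) {η Δ : ℝ} (hΔ : 0 < Δ) (hη : 2 ≤ η)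
    (μ : Measure ℝ) [IsProbabilityMeasure μ] (hμ : μ (Set.Icc (-Δ) Δ) = 1) :
    ∀ α : ℝ, 0 < α → α ≤ 1 → c2 η Δ μ α ≤ cN N η Δ μ α := by
  intro α hα hα1
  haveI hne : Nonempty (Fin (N-1)) := Fin.pos_iff_nonempty.mp (by omega)
  set C : ℝ := ((1+η)*Δ)^2 with hC
  have hC0 : 0 ≤ C := sq_nonneg _
  -- measurability of midN and accN
  have hsup : Measurable (fun p : ℝ × (Fin (N-1) → ℝ) => ⨆ i, p.2 i) :=
    Measurable.iSup (fun i => (measurable_pi_apply i).comp measurable_snd)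
  have hinf : Measurable (fun p : ℝ × (Fin (N-1) → ℝ) => ⨅ i, p.2 i) :=
    Measurable.iInf (fun i => (measurable_pi_apply i).comp measurable_snd)
  have hmidN : Measurable (midN N) := by
    unfold midN
    exact ((measurable_fst.max hsup).add (measurable_fst.min hinf)).div_const 2
  have haccN : MeasurableSet (accN N η Δ) := by
    have : Measurable (fun p : ℝ × (Fin (N-1) → ℝ) =>
        max p.1 (⨆ i, p.2 i) - min p.1 (⨅ i, p.2 i)) :=
      (measurable_fst.max hsup).sub (measurable_fst.min hinf)
    exact measurableSet_le this measurable_const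
  -- nonnegativity and boundedness of MSE_N
  have hnonneg : ∀ ν : Measure (Fin (N-1) → ℝ), 0 ≤ MSE_N N η Δ μ ν := fun ν =>
    integral_nonneg (fun p => sq_nonneg _)
  have hbound : ∀ ν : Measure (Fin (N-1) → ℝ), IsProbabilityMeasure ν →
      MSE_N N η Δ μ ν ≤ C := by
    intro ν hν
    set P := μ.prod ν with hP
    by_cases h0 : P (accN N η Δ) = 0
    · have : P[|accN N η Δ] = 0 := by
        rw [ProbabilityTheory.cond, Measure.restrict_eq_zero.mpr h0, smul_zero]
      unfold MSE_N
      rw [← hP, this, integral_zero_measure]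
      exact hC0
    · haveI : IsProbabilityMeasure (P[|accN N η Δ]) :=
        ProbabilityTheory.cond_isProbabilityMeasure h0
      -- a.e. bound
      have hIcc : ∀ᵐ p ∂P, p.1 ∈ Set.Icc (-Δ) Δ := by
        have hcompl : P ((fun p : ℝ × (Fin (N-1) → ℝ) => p.1) ⁻¹' (Set.Icc (-Δ) Δ)ᶜ) = 0 := by
          rw [← Measure.map_apply measurable_fst (measurableSet_Icc.compl),
            Measure.map_fst_prod]
          simp [measure_compl measurableSet_Icc (by simp : μ (Set.Icc (-Δ) Δ) ≠ ⊤), hμ]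
        exact measure_mono_null (fun p hp => hp) hcompl
      have hIcc' : ∀ᵐ p ∂(P[|accN N η Δ]), p.1 ∈ Set.Icc (-Δ) Δ :=
        Measure.ae_smul_measure (ae_restrict_of_ae hIcc) _
      have hmem : ∀ᵐ p ∂(P[|accN N η Δ]), p ∈ accN N η Δ :=
        Measure.ae_smul_measure (ae_restrict_mem haccN) _
      have haebd : ∀ᵐ p ∂(P[|accN N η Δ]), ‖(midN N p)^2‖ ≤ C := by
        filter_upwards [hIcc', hmem] with p hp1 hp2
        rw [Real.norm_eq_abs, abs_of_nonneg (sq_nonneg _)]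
        obtain ⟨hl, hr⟩ := hp1
        have h2 : max p.1 (⨆ i, p.2 i) - min p.1 (⨅ i, p.2 i) ≤ η * Δ := hp2
        have hml : min p.1 (⨅ i, p.2 i) ≤ p.1 := min_le_left _ _
        have hmr : p.1 ≤ max p.1 (⨆ i, p.2 i) := le_max_left _ _
        have hmm : min p.1 (⨅ i, p.2 i) ≤ max p.1 (⨆ i, p.2 i) := hml.trans hmr
        have hub : midN N p ≤ (1+η)*Δ := by
          unfold midN; nlinarith
        have hlb : -((1+η)*Δ) ≤ midN N p := by
          unfold midN; nlinarith
        exact sq_le_sq' hlb hub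
      have hint : Integrable (fun p => (midN N p)^2) (P[|accN N η Δ]) :=
        Integrable.mono' (integrable_const C) ((hmidN.pow_const 2).aestronglyMeasurable) haebd
      calc MSE_N N η Δ μ ν ≤ ∫ _, C ∂(P[|accN N η Δ]) := by
            unfold MSE_N
            rw [← hP]
            refine integral_mono_ae hint (integrable_const C) ?_
            filter_upwards [haebd] with p hp
            calc (midN N p)^2 ≤ ‖(midN N p)^2‖ := le_abs_self _
            _ ≤ C := hp
        _ = C := by simp
  -- now prove sSup ≤ sSup
  set SN := {r | ∃ ν : Measure (Fin (N-1) → ℝ), IsProbabilityMeasure ν ∧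
    α ≤ PA_N N η Δ μ ν ∧ r = MSE_N N η Δ μ ν} with hSN
  have hbdd : BddAbove SN := ⟨C, fun r hr => by
    obtain ⟨ν, hν, _, hr⟩ := hr
    exact hr ▸ hbound ν hν⟩
  have hcN0 : 0 ≤ cN N η Δ μ α := Real.sSup_nonneg (fun r hr => by
    obtain ⟨ν, hν, _, hr⟩ := hr
    exact hr ▸ hnonneg ν)
  refine Real.sSup_le ?_ hcN0
  rintro r ⟨κ, hκ, hPA, hr⟩
  -- construct the N-node strategy
  haveI : SFinite κ := inferInstance
  set c : ℝ → (Fin (N-1) → ℝ) := fun t _ => t with hc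
  have hcmeas : Measurable c := measurable_pi_lambda _ (fun _ => measurable_id)
  set T : ℝ × ℝ → ℝ × (Fin (N-1) → ℝ) := Prod.map id c with hT
  have hTmeas : Measurable T := measurable_id.prodMap hcmeas
  set ν := κ.map c with hν
  haveI : IsProbabilityMeasure ν := Measure.isProbabilityMeasure_map hcmeas.aemeasurable
  have hprod : μ.prod ν = (μ.prod κ).map T := by
    rw [hν, hT, ← Measure.map_prod_map μ κ measurable_id hcmeas, Measure.map_id]
  have hacc : T ⁻¹' accN N η Δ = acc2 η Δ := by
    ext p
    simp [accN, acc2, hT, Prod.map, hc, ciSup_const, ciInf_const]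
  have hmid : ∀ p : ℝ × ℝ, midN N (T p) = mid2 p := by
    intro p
    simp [midN, mid2, hT, Prod.map, hc, ciSup_const, ciInf_const]
  have hPAeq : PA_N N η Δ μ ν = PA_2 η Δ μ κ := by
    unfold PA_N PA_2
    rw [hprod, Measure.map_apply hTmeas haccN, hacc]
  have hcond : (μ.prod ν)[|accN N η Δ] = ((μ.prod κ)[|acc2 η Δ]).map T := by
    rw [hprod, ProbabilityTheory.cond, ProbabilityTheory.cond,
      Measure.map_apply hTmeas haccN, hacc,
      Measure.restrict_map hTmeas haccN, hacc, Measure.map_smul]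
  have hMSEeq : MSE_N N η Δ μ ν = MSE_2 η Δ μ κ := by
    unfold MSE_N MSE_2
    rw [hcond, integral_map hTmeas.aemeasurable
      ((hmidN.pow_const 2).aestronglyMeasurable)]
    exact integral_congr_ae (Filter.Eventually.of_forall (fun p => by simp only [hmid p]))
  have hmem : r ∈ SN := ⟨ν, inferInstance, by rw [hPAeq]; exact hPA, by rw [hMSEeq]; exact hr⟩
  exact le_csSup hbdd hmem
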